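/- For every integer r ≥ 3 there exists a threshold u₀(r) with the following property: if C, C' > 0 and u, v, w are real numbers with v ≥ r−1, w ≥ r−2, u > u₀(r), satisfying C(u,r) = C(v,r) + C(w,r−1) and C' ≤ C(w,r−1) < C(u−1,r−1) − C, and moreover w > u − 3r, then C(v,r−1) + C(w,r−2) − C(u,r−1) > C/(3u). -/

import Mathlib

/-- Generalized binomial coefficient `C(x, k) = x(x-1)⋯(x-k+1)/k!` for real `x`. -/
noncomputable def gchoose (x : ℝ) (k : ℕ) : ℝ :=
  (∏ i ∈ Finset.range k, (x - i)) / (Nat.factorial k)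

namespace GC

/-- raw product -/
noncomputable def pr (x : ℝ) (k : ℕ) : ℝ := ∏ i ∈ Finset.range k, (x - i)

lemma gchoose_eq (x : ℝ) (k : ℕ) : gchoose x k = pr x k / (Nat.factorial k) := rfl

lemma pr_nonneg {x : ℝ} {k : ℕ} (h : (k : ℝ) - 1 ≤ x) : 0 ≤ pr x k := by
  apply Finset.prod_nonneg
  intro i hi
  have : (i : ℝ) ≤ (k : ℝ) - 1 := by
    have := Finset.mem_range.mp hi
    have : (i:ℝ) + 1 ≤ k := by exact_mod_cast this
    linarith
  linarith

lemma pr_mono {x y : ℝ} {k : ℕ} (h : (k : ℝ) - 1 ≤ x) (hxy : x ≤ y) : pr x k ≤ pr y k := by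
  apply Finset.prod_le_prod
  · intro i hi
    have := Finset.mem_range.mp hi
    have : (i:ℝ) + 1 ≤ k := by exact_mod_cast this
    linarith
  · intro i _; linarith

lemma pr_succ (x : ℝ) (k : ℕ) : pr x (k+1) = pr x k * (x - k) := by
  simp [pr, Finset.prod_range_succ]

lemma pr_shift (x : ℝ) (k : ℕ) : pr x (k+1) = x * pr (x-1) k := by
  rw [pr, Finset.prod_range_succ']
  simp only [Nat.cast_zero, sub_zero, Nat.cast_add, Nat.cast_one]
  rw [mul_comm]

  congr 1
  apply Finset.prod_congr rfl
  intro i _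
  push_cast
  ring

lemma pr_pascal (x : ℝ) (k : ℕ) : pr x (k+1) = pr (x-1) (k+1) + (k+1) * pr (x-1) k := by
  rw [pr_shift, pr_succ]
  ring

lemma pr_le_pow {x b : ℝ} {k : ℕ} (h : (k : ℝ) - 1 ≤ x) (hb : x ≤ b) : pr x k ≤ b ^ k := by
  calc pr x k ≤ ∏ _i ∈ Finset.range k, b := by
        apply Finset.prod_le_prod
        · intro i hi
          have := Finset.mem_range.mp hi
          have : (i:ℝ) + 1 ≤ k := by exact_mod_cast this
          linarith
        · intro i hi
          have := Finset.mem_range.mp hi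
          have h0 : (0:ℝ) ≤ i := by positivity
          linarith
    _ = b ^ k := by simp

lemma pow_le_pr {x a : ℝ} {k : ℕ} (ha : 0 ≤ a) (h : a ≤ x - ((k:ℝ) - 1)) : a ^ k ≤ pr x k := by
  calc a ^ k = ∏ _i ∈ Finset.range k, a := by simp
    _ ≤ pr x k := by
        apply Finset.prod_le_prod
        · intro i _; exact ha
        · intro i hi
          have := Finset.mem_range.mp hi
          have : (i:ℝ) + 1 ≤ k := by exact_mod_cast this
          linarith

lemma pr_diff_le {u v : ℝ} (k : ℕ) (hv : (k : ℝ) ≤ v) (hvu : v ≤ u) :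
    pr u (k+1) - pr v (k+1) ≤ (u - v) * (k+1) * pr u k := by
  induction k with
  | zero => simp [pr]
  | succ k ih =>
    push_cast
    have hv' : (k:ℝ) ≤ v := by push_cast at hv ⊢; linarith
    have ih' := ih hv'
    have h1 : pr u (k+2) - pr v (k+2) =
        (pr u (k+1) - pr v (k+1)) * (u - (k+1)) + pr v (k+1) * (u - v) := by
      rw [pr_succ u (k+1), pr_succ v (k+1)]; push_cast; ring
    have hnn : (0:ℝ) ≤ u - (k+1) := by push_cast at hv ⊢; linarith
    have h2 : (pr u (k+1) - pr v (k+1)) * (u - (k+1)) ≤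
        ((u - v) * (k+1) * pr u k) * (u - (k+1)) := by
      exact mul_le_mul_of_nonneg_right ih' hnn
    have h3 : pr v (k+1) ≤ pr u (k+1) := by
      apply pr_mono _ hvu
      push_cast; linarith
    have h4 : pr v (k+1) * (u - v) ≤ pr u (k+1) * (u - v) :=
      mul_le_mul_of_nonneg_right h3 (by linarith)
    have h5 : pr u (k+1) = pr u k * (u - k) := pr_succ u k
    have hpk : 0 ≤ pr u k := pr_nonneg (by push_cast at hv ⊢; linarith)
    have huv : 0 ≤ u - v := by linarith
    calc pr u (k+2) - pr v (k+2)
        ≤ ((u - v) * (k+1) * pr u k) * (u - (k+1)) + pr u (k+1) * (u - v) := by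
          rw [h1]; linarith
      _ = (u-v) * pr u k * ((k+1) * (u - (k+1)) + (u - k)) := by rw [h5]; push_cast; ring
      _ ≤ (u-v) * pr u k * ((k+1) * (u - k) + (u - k)) := by
          apply mul_le_mul_of_nonneg_left
          · have : (0:ℝ) ≤ (k:ℝ)+1 := by positivity
            nlinarith
          · positivity
      _ = (u - v) * (k+1+1) * pr u (k+1) := by rw [h5]; push_cast; ring

lemma pr_le_diff {u v : ℝ} (k : ℕ) (hv : (k : ℝ) ≤ v) (hvu : v ≤ u) :
    (u - v) * (k+1) * pr (v-1) k ≤ pr u (k+1) - pr v (k+1) := by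
  induction k with
  | zero => simp [pr]
  | succ k ih =>
    push_cast
    have hv' : (k:ℝ) ≤ v := by push_cast at hv ⊢; linarith
    have ih' := ih hv'
    have h1 : pr u (k+2) - pr v (k+2) =
        (pr u (k+1) - pr v (k+1)) * (u - (k+1)) + pr v (k+1) * (u - v) := by
      rw [pr_succ u (k+1), pr_succ v (k+1)]; push_cast; ring
    have hnn : (0:ℝ) ≤ u - (k+1) := by push_cast at hv ⊢; linarith
    have h2 : ((u - v) * (k+1) * pr (v-1) k) * (u - (k+1)) ≤
        (pr u (k+1) - pr v (k+1)) * (u - (k+1)) :=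
      mul_le_mul_of_nonneg_right ih' hnn
    have hprv1 : 0 ≤ pr (v-1) k := pr_nonneg (by push_cast at hv ⊢; linarith)
    have h3 : pr (v-1) (k+1) ≤ pr v (k+1) := by
      apply pr_mono _ (by linarith)
      push_cast at hv ⊢; linarith
    have huv : 0 ≤ u - v := by linarith
    have h4 : pr (v-1) (k+1) * (u - v) ≤ pr v (k+1) * (u - v) :=
      mul_le_mul_of_nonneg_right h3 huv
    have h5 : pr (v-1) (k+1) = pr (v-1) k * (v - 1 - k) := pr_succ (v-1) k
    calc (u - v) * (k+1+1) * pr (v-1) (k+1)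
        = ((u - v) * (k+1) * pr (v-1) k) * (v - 1 - (k:ℝ)) + pr (v-1) (k+1) * (u - v) := by
          rw [h5]; push_cast; ring
      _ ≤ ((u - v) * (k+1) * pr (v-1) k) * (u - (k+1)) + pr v (k+1) * (u - v) := by
          have hle : v - 1 - (k:ℝ) ≤ u - (k+1) := by push_cast; linarith
          have hnn2 : (0:ℝ) ≤ (u - v) * (k+1) * pr (v-1) k := by positivity
          nlinarith [mul_le_mul_of_nonneg_left hle hnn2]
      _ ≤ pr u (k+2) - pr v (k+2) := by rw [h1]; linarith

lemma pow_diff_le {a b : ℝ} (k : ℕ) (ha : 0 ≤ a) (hab : a ≤ b) :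
    b ^ (k+1) - a ^ (k+1) ≤ (k+1) * (b - a) * b ^ k := by
  induction k with
  | zero => simp
  | succ k ih =>
    push_cast
    have hb : 0 ≤ b := le_trans ha hab
    have h1 : b ^ (k+2) - a ^ (k+2) = b * (b^(k+1) - a^(k+1)) + a^(k+1) * (b - a) := by ring
    have h2 : a ^ (k+1) ≤ b ^ (k+1) := pow_le_pow_left₀ ha hab _
    have h3 : b * (b^(k+1) - a^(k+1)) ≤ b * ((k+1) * (b-a) * b^k) :=
      mul_le_mul_of_nonneg_left ih hb
    have h4 : a^(k+1) * (b-a) ≤ b^(k+1) * (b-a) :=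
      mul_le_mul_of_nonneg_right h2 (by linarith)
    calc b ^ (k+2) - a ^ (k+2) ≤ b * ((k+1) * (b-a) * b^k) + b^(k+1) * (b-a) := by
          rw [h1]; linarith
      _ = (k+1+1 : ℝ) * (b - a) * b ^ (k+1) := by push_cast; ring




lemma fact_pos (k : ℕ) : (0:ℝ) < (Nat.factorial k : ℝ) := by
  exact_mod_cast Nat.factorial_pos k

lemma fact_succ (k : ℕ) : ((k+1).factorial : ℝ) = ((k:ℝ)+1) * (k.factorial : ℝ) := by
  rw [Nat.factorial_succ]; push_cast; ring

lemma gchoose_nonneg {x : ℝ} {k : ℕ} (h : (k : ℝ) - 1 ≤ x) : 0 ≤ gchoose x k := by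
  rw [gchoose_eq]
  exact div_nonneg (pr_nonneg h) (fact_pos k).le

lemma gchoose_mono {x y : ℝ} {k : ℕ} (h : (k : ℝ) - 1 ≤ x) (hxy : x ≤ y) :
    gchoose x k ≤ gchoose y k := by
  rw [gchoose_eq, gchoose_eq]
  gcongr
  exact pr_mono h hxy

lemma gchoose_pascal (x : ℝ) (k : ℕ) :
    gchoose x (k+1) = gchoose (x-1) (k+1) + gchoose (x-1) k := by
  rw [gchoose_eq, gchoose_eq, gchoose_eq, pr_pascal, fact_succ]
  have h1 : (k.factorial : ℝ) ≠ 0 := (fact_pos k).ne'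
  have h2 : ((k:ℝ)+1) ≠ 0 := by positivity
  field_simp

lemma gchoose_diff_le {u v : ℝ} (k : ℕ) (hv : (k : ℝ) ≤ v) (hvu : v ≤ u) :
    gchoose u (k+1) - gchoose v (k+1) ≤ (u - v) * gchoose u k := by
  rw [gchoose_eq, gchoose_eq, gchoose_eq, div_sub_div_same]
  have h := pr_diff_le k hv hvu
  calc (pr u (k+1) - pr v (k+1)) / ((k+1).factorial : ℝ)
      ≤ ((u - v) * (k+1) * pr u k) / ((k+1).factorial : ℝ) := by
        gcongr
    _ = (u - v) * (pr u k / (k.factorial : ℝ)) := by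
        rw [fact_succ]
        have h1 : (k.factorial : ℝ) ≠ 0 := (fact_pos k).ne'
        have h2 : ((k:ℝ)+1) ≠ 0 := by positivity
        field_simp

lemma gchoose_le_diff {u v : ℝ} (k : ℕ) (hv : (k : ℝ) ≤ v) (hvu : v ≤ u) :
    (u - v) * gchoose (v-1) k ≤ gchoose u (k+1) - gchoose v (k+1) := by
  rw [gchoose_eq, gchoose_eq, gchoose_eq, div_sub_div_same]
  have h := pr_le_diff k hv hvu
  calc (u - v) * (pr (v-1) k / (k.factorial : ℝ))
      = ((u - v) * (k+1) * pr (v-1) k) / ((k+1).factorial : ℝ) := by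
        rw [fact_succ]
        have h1 : (k.factorial : ℝ) ≠ 0 := (fact_pos k).ne'
        have h2 : ((k:ℝ)+1) ≠ 0 := by positivity
        field_simp
    _ ≤ (pr u (k+1) - pr v (k+1)) / ((k+1).factorial : ℝ) := by
        gcongr

lemma num1 {x u : ℝ} (hx : 0 ≤ x) (hu : 100*(x+3)^3 < u) :
    2700 < u ∧ 4*(x+3)+1 < u ∧ 8*(x+3)*(x+1) + x ≤ u ∧
      16*(x+3)*((x+1)*(x+2)) ≤ u ∧ 100*(x+10) ≤ u := by
  have h2 : 0 ≤ x*x := mul_nonneg hx hx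
  have h3 : 0 ≤ x*x*x := mul_nonneg h2 hx
  refine ⟨by nlinarith, by nlinarith, by nlinarith, by nlinarith, by nlinarith⟩

lemma num2 {x u S Y : ℝ} (hx : 0 ≤ x) (hu : 0 < u) (hS : 0 ≤ S)
    (h16 : 16*(x+3)*((x+1)*(x+2)) ≤ u)
    (hB : u*S - Y ≤ (2*x+2)*(4*(x+3))*S) :
    u*(u*S) ≤ 2*u*((x+2)*Y - (x+1)*(u*S)) := by
  have f1 : (2*u*(x+2))*(u*S - Y) ≤ (2*u*(x+2))*((2*x+2)*(4*(x+3))*S) :=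
    mul_le_mul_of_nonneg_left hB (by nlinarith)
  have f2 : (16*(x+3)*((x+1)*(x+2)))*(u*S) ≤ u*(u*S) :=
    mul_le_mul_of_nonneg_right h16 (mul_nonneg hu.le hS)
  nlinarith [f1, f2, mul_nonneg hu.le hS]

lemma num3 {x u Sm Au A2 : ℝ} (hx : 0 ≤ x) (hu : 0 < u) (hSm : 0 ≤ Sm)
    (h16 : 16*(x+3)*((x+1)*(x+2)) ≤ u)
    (hAu : Au ≤ u*(u*Sm)) (hA2 : u*Sm - (x+1)*(4*(x+3))*Sm ≤ A2) :
    Au ≤ 2*u*((x+2)*A2) := by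
  have f1 : (2*u*(x+2))*(u*Sm - (x+1)*(4*(x+3))*Sm) ≤ (2*u*(x+2))*A2 :=
    mul_le_mul_of_nonneg_left hA2 (by nlinarith)
  have f2 : (16*(x+3)*((x+1)*(x+2)))*(u*Sm) ≤ u*(u*Sm) :=
    mul_le_mul_of_nonneg_right h16 (mul_nonneg hu.le hSm)
  nlinarith [f1, f2, mul_nonneg hu.le hSm,
    mul_nonneg hx (mul_nonneg (mul_nonneg hu.le hu.le) hSm)]

end GC

set_option maxHeartbeats 1000000 in
open GC in
/-- Part (1) of the defect estimate: for `r ≥ 3` there is a threshold `u₀(r)` such that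
if `C(u,r) = C(v,r) + C(w,r-1)`, `C' ≤ C(w,r-1) < C(u-1,r-1) - C` and `w > u - 3r`,
then `C(v,r-1) + C(w,r-2) - C(u,r-1) > C/(3u)`. -/
theorem stmt16 (r : ℕ) (hr : 3 ≤ r) :
    ∃ u0 : ℝ, ∀ C C' u v w : ℝ, 0 < C → 0 < C' →
      (r : ℝ) - 1 ≤ v → (r : ℝ) - 2 ≤ w → u0 < u →
      gchoose u r = gchoose v r + gchoose w (r - 1) →
      C' ≤ gchoose w (r - 1) →
      gchoose w (r - 1) < gchoose (u - 1) (r - 1) - C →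
      u - 3 * r < w →
      C / (3 * u) < gchoose v (r - 1) + gchoose w (r - 2) - gchoose u (r - 1) := by
  obtain ⟨m, rfl⟩ : ∃ m, r = m + 3 := ⟨r - 3, by omega⟩
  refine ⟨100 * ((m:ℝ) + 3)^3, ?_⟩
  intro C C' u v w hC hC' hv hw hu heq hC'w hwlt hw3
  simp only [show m + 3 - 1 = m + 2 from rfl, show m + 3 - 2 = m + 1 from rfl]
    at heq hC'w hwlt ⊢
  push_cast at hv hw hw3 hu
  have hm0 : (0:ℝ) ≤ (m:ℝ) := Nat.cast_nonneg m
  obtain ⟨hu27, hu4n, hu8, hu16, hum⟩ := num1 hm0 hu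
  have hupos : (0:ℝ) < u := by linarith
  have h4n0 : (0:ℝ) ≤ u - 4*((m:ℝ)+3) := by linarith
  have h4npos : (0:ℝ) < u - 4*((m:ℝ)+3) := by linarith
  have hum' : (m:ℝ) + 10 ≤ u := by linarith
  -- positivity of gchoose w (m+2)
  have hfw : (0:ℝ) < gchoose w (m+2) := lt_of_lt_of_le hC' hC'w
  -- v ≤ u
  have hvu : v ≤ u := by
    by_contra hcon
    push_neg at hcon
    have := gchoose_mono (x := u) (y := v) (k := m+3) (by push_cast; linarith) hcon.le
    linarith
  -- Pascal at u
  have hP3 : gchoose u (m+3) = gchoose (u-1) (m+3) + gchoose (u-1) (m+2) :=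
    gchoose_pascal u (m+2)
  have hP2 : gchoose u (m+2) = gchoose (u-1) (m+2) + gchoose (u-1) (m+1) :=
    gchoose_pascal u (m+1)
  set D : ℝ := gchoose (u-1) (m+2) - gchoose w (m+2) with hDdef
  have hCD : C < D := by rw [hDdef]; linarith
  have hD0 : 0 < D := lt_trans hC hCD
  have hveq : gchoose v (m+3) - gchoose (u-1) (m+3) = D := by
    rw [hDdef]; linarith
  -- u - 1 ≤ v
  have hu1v : u - 1 ≤ v := by
    by_contra hcon
    push_neg at hcon
    have := gchoose_mono (x := v) (y := u-1) (k := m+3) (by push_cast; linarith) hcon.le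
    linarith
  set dlt : ℝ := v - (u - 1) with hdlt
  have hdlt0 : 0 ≤ dlt := by rw [hdlt]; linarith
  -- D ≤ dlt * gchoose u (m+2)
  have hstep1 : gchoose v (m+3) - gchoose (u-1) (m+3) ≤ dlt * gchoose v (m+2) :=
    gchoose_diff_le (m+2) (by push_cast; linarith) hu1v
  have hmono2 : gchoose v (m+2) ≤ gchoose u (m+2) :=
    gchoose_mono (by push_cast; linarith) hvu
  have hDle : D ≤ dlt * gchoose u (m+2) := by
    calc D = gchoose v (m+3) - gchoose (u-1) (m+3) := hveq.symm
      _ ≤ dlt * gchoose v (m+2) := hstep1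
      _ ≤ dlt * gchoose u (m+2) := mul_le_mul_of_nonneg_left hmono2 hdlt0
  -- A' lower bound
  have hA0 : dlt * gchoose (u-1-1) (m+1) ≤ gchoose v (m+2) - gchoose (u-1) (m+2) :=
    gchoose_le_diff (m+1) (by push_cast; linarith) hu1v
  have hu2eq : u - 1 - 1 = u - 2 := by ring
  rw [hu2eq] at hA0
  -- goal reduction
  have hgoalT : gchoose v (m+2) + gchoose w (m+1) - gchoose u (m+2)
      = (gchoose v (m+2) - gchoose (u-1) (m+2))
        - (gchoose (u-1) (m+1) - gchoose w (m+1)) := by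
    rw [hP2]; ring
  rw [hgoalT]
  set A' : ℝ := gchoose v (m+2) - gchoose (u-1) (m+2) with hA'def
  set B : ℝ := gchoose (u-1) (m+1) - gchoose w (m+1) with hBdef
  -- factorials
  set F1 : ℝ := (Nat.factorial m : ℝ) with hF1
  set F2 : ℝ := (Nat.factorial (m+1) : ℝ) with hF2
  set F3 : ℝ := (Nat.factorial (m+2) : ℝ) with hF3
  have hF1p : 0 < F1 := fact_pos m
  have hF2p : 0 < F2 := fact_pos (m+1)
  have hF3p : 0 < F3 := fact_pos (m+2)
  have hF21 : F2 = ((m:ℝ)+1) * F1 := by rw [hF2, hF1, fact_succ]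
  have hF32 : F3 = ((m:ℝ)+2) * F2 := by
    rw [hF3, hF2]
    have h := fact_succ (m+1)
    push_cast at h ⊢
    linarith
  -- raw products
  set Au : ℝ := pr u (m+2) with hAu
  set A2 : ℝ := pr (u-2) (m+1) with hA2
  set A3 : ℝ := pr (u-1) m with hA3
  set A4 : ℝ := pr (w-1) (m+1) with hA4
  have hgu : gchoose u (m+2) = Au / F3 := by rw [gchoose_eq, ← hAu, ← hF3]
  have hg2 : gchoose (u-2) (m+1) = A2 / F2 := by rw [gchoose_eq, ← hA2, ← hF2]
  have hg3 : gchoose (u-1) m = A3 / F1 := by rw [gchoose_eq, ← hA3, ← hF1]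
  have hg4 : gchoose (w-1) (m+1) = A4 / F2 := by rw [gchoose_eq, ← hA4, ← hF2]
  -- bounds on the A's
  have hAu_le : Au ≤ u ^ (m+2) := pr_le_pow (by push_cast; linarith) le_rfl
  have hAu_nn : 0 ≤ Au := pr_nonneg (by push_cast; linarith)
  have hA2_ge : (u - 4*((m:ℝ)+3)) ^ (m+1) ≤ A2 :=
    pow_le_pr h4n0 (by push_cast; linarith)
  have hA2_nn : 0 ≤ A2 := le_trans (pow_nonneg h4n0 _) hA2_ge
  have hA3_le : A3 ≤ u ^ m := pr_le_pow (by push_cast; linarith) (by linarith)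
  have hA3_nn : 0 ≤ A3 := pr_nonneg (by push_cast; linarith)
  have hA4_ge : (u - 4*((m:ℝ)+3)) ^ (m+1) ≤ A4 :=
    pow_le_pr h4n0 (by push_cast; linarith)
  have hA4_pos : 0 < A4 := lt_of_lt_of_le (pow_pos h4npos _) hA4_ge
  -- Bernoulli-style bounds
  have hB1 : u ^ (m+1) - (u - 4*((m:ℝ)+3)) ^ (m+1)
      ≤ ((m:ℝ)+1) * (4*((m:ℝ)+3)) * u ^ m := by
    have h := pow_diff_le (a := u - 4*((m:ℝ)+3)) (b := u) m h4n0 (by linarith)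
    calc u ^ (m+1) - (u - 4*((m:ℝ)+3)) ^ (m+1)
        ≤ ((m:ℝ)+1) * (u - (u - 4*((m:ℝ)+3))) * u ^ m := h
      _ = ((m:ℝ)+1) * (4*((m:ℝ)+3)) * u ^ m := by ring
  have hB2 : u ^ (2*m+2) - (u - 4*((m:ℝ)+3)) ^ (2*m+2)
      ≤ (2*(m:ℝ)+2) * (4*((m:ℝ)+3)) * u ^ (2*m+1) := by
    have h := pow_diff_le (a := u - 4*((m:ℝ)+3)) (b := u) (2*m+1) h4n0 (by linarith)
    push_cast at h
    calc u ^ (2*m+2) - (u - 4*((m:ℝ)+3)) ^ (2*m+2)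
        = u ^ (2*m+1+1) - (u - 4*((m:ℝ)+3)) ^ (2*m+1+1) := by ring_nf
      _ ≤ (2*(m:ℝ)+1+1) * (u - (u - 4*((m:ℝ)+3))) * u ^ (2*m+1) := h
      _ = (2*(m:ℝ)+2) * (4*((m:ℝ)+3)) * u ^ (2*m+1) := by ring
  -- positivity of gchoose u (m+2)
  have hgu_pos : 0 < gchoose u (m+2) := by
    rw [hgu]
    have h1 : (1:ℝ) ^ (m+2) ≤ Au := pow_le_pr (by norm_num) (by push_cast; linarith)
    simp only [one_pow] at h1
    exact div_pos (lt_of_lt_of_le one_pos h1) hF3p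
  have hgunn : 0 ≤ gchoose u (m+2) := hgu_pos.le
  have hG2nn : 0 ≤ gchoose (u-2) (m+1) := by
    rw [hg2]; exact div_nonneg hA2_nn hF2p.le
  have hg3nn : 0 ≤ gchoose (u-1) m := by
    rw [hg3]; exact div_nonneg hA3_nn hF1p.le
  have hg4pos : 0 < gchoose (w-1) (m+1) := by
    rw [hg4]; exact div_pos hA4_pos hF2p
  by_cases hcw : w ≤ u - 1
  · -- main case: w ≤ u - 1
    have hBle : B ≤ (u - 1 - w) * gchoose (u-1) m := by
      rw [hBdef]
      exact gchoose_diff_le (u := u-1) (v := w) m (by push_cast; linarith) hcw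
    have hDge : (u - 1 - w) * gchoose (w-1) (m+1) ≤ D := by
      rw [hDdef]
      exact gchoose_le_diff (u := u-1) (v := w) (m+1) (by push_cast; linarith) hcw
    have hA4_le : A4 ≤ u ^ (m+1) := pr_le_pow (by push_cast; linarith) (by linarith)
    -- key polynomial inequality
    have hkeyP : Au * A4 ≤
        2 * u * (((m:ℝ)+2) * (A2 * A4) - ((m:ℝ)+1) * (Au * A3)) := by
      have hupnn : (0:ℝ) ≤ u ^ (m+2) := pow_nonneg hupos.le _
      have c1 : ((m:ℝ)+1) * (Au * A3) ≤ ((m:ℝ)+1) * (u^(m+2) * u^m) :=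
        mul_le_mul_of_nonneg_left
          (mul_le_mul hAu_le hA3_le hA3_nn hupnn) (by linarith)
      have c2 : ((m:ℝ)+2) * ((u - 4*((m:ℝ)+3))^(m+1) * (u - 4*((m:ℝ)+3))^(m+1))
          ≤ ((m:ℝ)+2) * (A2 * A4) :=
        mul_le_mul_of_nonneg_left
          (mul_le_mul hA2_ge hA4_ge (pow_nonneg h4n0 _) hA2_nn) (by linarith)
      have c3 : Au * A4 ≤ u^(m+2) * u^(m+1) :=
        mul_le_mul hAu_le hA4_le hA4_pos.le hupnn
      have epow1 : (u - 4*((m:ℝ)+3))^(m+1) * (u - 4*((m:ℝ)+3))^(m+1)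
          = (u - 4*((m:ℝ)+3))^(2*m+2) := by
        rw [← pow_add]; ring_nf
      have epow2 : u^(m+2) * u^m = u^(2*m+2) := by rw [← pow_add]; ring_nf
      have epow3 : u^(m+2) * u^(m+1) = u * (u * u^(2*m+1)) := by
        rw [← pow_add, show m + 2 + (m+1) = (2*m+1) + 1 + 1 from by ring,
          pow_succ, pow_succ]; ring
      have epow4 : u^(2*m+2) = u * u^(2*m+1) := by
        rw [show 2*m+2 = (2*m+1)+1 from by ring, pow_succ]; ring
      rw [epow1] at c2
      rw [epow2, epow4] at c1
      have hS : (0:ℝ) ≤ u^(2*m+1) := pow_nonneg hupos.le _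
      have hB2' : u * u^(2*m+1) - (u - 4*((m:ℝ)+3))^(2*m+2)
          ≤ (2*(m:ℝ)+2) * (4*((m:ℝ)+3)) * u^(2*m+1) := by
        rw [← epow4]; exact hB2
      have hnum := num2 (Y := (u - 4*((m:ℝ)+3))^(2*m+2)) hm0 hupos hS hu16 hB2'
      calc Au * A4 ≤ u^(m+2) * u^(m+1) := c3
        _ = u * (u * u^(2*m+1)) := epow3
        _ ≤ 2 * u * (((m:ℝ)+2) * (u - 4*((m:ℝ)+3))^(2*m+2)
              - ((m:ℝ)+1) * (u * u^(2*m+1))) := hnum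
        _ ≤ 2 * u * (((m:ℝ)+2) * (A2 * A4) - ((m:ℝ)+1) * (Au * A3)) := by
            apply mul_le_mul_of_nonneg_left _ (by linarith)
            linarith [c1, c2]
    -- transfer key inequality to gchoose level
    have hguA : gchoose u (m+2) * gchoose (w-1) (m+1) = Au * A4 / (F3 * F2) := by
      rw [hgu, hg4]; ring
    have hdiff : gchoose (u-2) (m+1) * gchoose (w-1) (m+1)
        - gchoose u (m+2) * gchoose (u-1) m
        = (((m:ℝ)+2) * (A2 * A4) - ((m:ℝ)+1) * (Au * A3)) / (F3 * F2) := by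
      rw [hg2, hg4, hgu, hg3, hF32, hF21]
      have h1 : F1 ≠ 0 := hF1p.ne'
      have h2 : ((m:ℝ)+1) ≠ 0 := by positivity
      have h3 : ((m:ℝ)+2) ≠ 0 := by positivity
      field_simp
    have hkey : gchoose u (m+2) * gchoose (w-1) (m+1) ≤
        2 * u * (gchoose (u-2) (m+1) * gchoose (w-1) (m+1)
          - gchoose u (m+2) * gchoose (u-1) m) := by
      rw [hguA, hdiff, ← mul_div_assoc]
      exact (div_le_div_iff_of_pos_right (mul_pos hF3p hF2p)).mpr hkeyP
    -- final chain
    have hGG4 : 0 ≤ gchoose u (m+2) * gchoose (w-1) (m+1) :=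
      mul_nonneg hgunn hg4pos.le
    have hs1 : dlt * gchoose (u-2) (m+1) - (u-1-w) * gchoose (u-1) m ≤ A' - B := by
      rw [hA'def]; linarith [hA0, hBle]
    have hs2 : D * (gchoose (u-2) (m+1) * gchoose (w-1) (m+1)) ≤
        (dlt * gchoose (u-2) (m+1)) * (gchoose u (m+2) * gchoose (w-1) (m+1)) := by
      have h := mul_le_mul_of_nonneg_right hDle
        (mul_nonneg hG2nn hg4pos.le)
      have he : (dlt * gchoose u (m+2)) * (gchoose (u-2) (m+1) * gchoose (w-1) (m+1))
          = (dlt * gchoose (u-2) (m+1)) * (gchoose u (m+2) * gchoose (w-1) (m+1)) := by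
        ring
      linarith [h, he]
    have hs3 : ((u-1-w) * gchoose (u-1) m) * (gchoose u (m+2) * gchoose (w-1) (m+1))
        ≤ D * (gchoose u (m+2) * gchoose (u-1) m) := by
      have h := mul_le_mul_of_nonneg_right hDge (mul_nonneg hgunn hg3nn)
      have he : ((u-1-w) * gchoose (w-1) (m+1)) * (gchoose u (m+2) * gchoose (u-1) m)
          = ((u-1-w) * gchoose (u-1) m) * (gchoose u (m+2) * gchoose (w-1) (m+1)) := by
        ring
      linarith [h, he]
    have hs4 : D * (gchoose (u-2) (m+1) * gchoose (w-1) (m+1)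
          - gchoose u (m+2) * gchoose (u-1) m)
        ≤ (A' - B) * (gchoose u (m+2) * gchoose (w-1) (m+1)) := by
      have h := mul_le_mul_of_nonneg_right hs1 hGG4
      have he1 : (dlt * gchoose (u-2) (m+1) - (u-1-w) * gchoose (u-1) m)
            * (gchoose u (m+2) * gchoose (w-1) (m+1))
          = (dlt * gchoose (u-2) (m+1)) * (gchoose u (m+2) * gchoose (w-1) (m+1))
            - ((u-1-w) * gchoose (u-1) m) * (gchoose u (m+2) * gchoose (w-1) (m+1)) := by
        ring
      have he2 : D * (gchoose (u-2) (m+1) * gchoose (w-1) (m+1)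
            - gchoose u (m+2) * gchoose (u-1) m)
          = D * (gchoose (u-2) (m+1) * gchoose (w-1) (m+1))
            - D * (gchoose u (m+2) * gchoose (u-1) m) := by
        ring
      linarith [h, he1, he2, hs2, hs3]
    have hs5 : D * (gchoose u (m+2) * gchoose (w-1) (m+1)) ≤
        2 * u * (D * (gchoose (u-2) (m+1) * gchoose (w-1) (m+1)
          - gchoose u (m+2) * gchoose (u-1) m)) := by
      have h := mul_le_mul_of_nonneg_left hkey hD0.le
      linarith [h]
    have hs6 : C * (gchoose u (m+2) * gchoose (w-1) (m+1)) <
        D * (gchoose u (m+2) * gchoose (w-1) (m+1)) :=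
      mul_lt_mul_of_pos_right hCD (mul_pos hgu_pos hg4pos)
    have hs7 : C * (gchoose u (m+2) * gchoose (w-1) (m+1)) <
        (2*(u*(A'-B))) * (gchoose u (m+2) * gchoose (w-1) (m+1)) := by
      have h := mul_le_mul_of_nonneg_left hs4 (by linarith : (0:ℝ) ≤ 2*u)
      have he3 : 2 * u * ((A' - B) * (gchoose u (m+2) * gchoose (w-1) (m+1)))
          = (2*(u*(A'-B))) * (gchoose u (m+2) * gchoose (w-1) (m+1)) := by ring
      linarith [hs5, hs6, h, he3]
    have hCT : C < 2*(u*(A'-B)) :=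
      lt_of_mul_lt_mul_right hs7 (mul_pos hgu_pos hg4pos).le
    have hTpos : 0 < u * (A'-B) := by linarith
    rw [div_lt_iff₀ (by linarith : (0:ℝ) < 3 * u)]
    have he : (A'-B)*(3*u) = 3*(u*(A'-B)) := by ring
    linarith [he]
  · -- easy case : u - 1 < w, so B ≤ 0
    push_neg at hcw
    have hB0 : B ≤ 0 := by
      rw [hBdef]
      have := gchoose_mono (x := u-1) (y := w) (k := m+1)
        (by push_cast; linarith) hcw.le
      linarith
    have hTA : dlt * gchoose (u-2) (m+1) ≤ A' - B := by
      rw [hA'def]; linarith [hA0]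
    -- gu ≤ 2u * g2
    have hgu2 : gchoose u (m+2) ≤ 2 * u * gchoose (u-2) (m+1) := by
      have h2 : u^(m+1) = u * u^m := by rw [pow_succ]; ring
      have h3 : u^(m+2) = u * (u * u^m) := by
        rw [show m+2 = m+1+1 from rfl, pow_succ, h2]; ring
      have hSm : (0:ℝ) ≤ u^m := pow_nonneg hupos.le m
      have hAu' : Au ≤ u * (u * u^m) := h3 ▸ hAu_le
      have hA2' : u * u^m - ((m:ℝ)+1)*(4*((m:ℝ)+3)) * u^m ≤ A2 := by
        have := hB1
        rw [h2] at this
        linarith [hA2_ge]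
      have hP := num3 hm0 hupos hSm hu16 hAu' hA2'
      calc gchoose u (m+2) = Au / F3 := hgu
        _ ≤ (2 * u * (((m:ℝ)+2) * A2)) / F3 := by gcongr
        _ = 2 * u * (A2 / F2) := by
            rw [hF32]
            have h2' : ((m:ℝ)+2) ≠ 0 := by positivity
            field_simp
        _ = 2 * u * gchoose (u-2) (m+1) := by rw [hg2]
    have hCT : C < 2*(u*(A'-B)) := by
      have h1 : dlt * gchoose u (m+2) ≤ dlt * (2 * u * gchoose (u-2) (m+1)) :=
        mul_le_mul_of_nonneg_left hgu2 hdlt0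
      have h2 : dlt * (2 * u * gchoose (u-2) (m+1))
          = 2 * u * (dlt * gchoose (u-2) (m+1)) := by ring
      have h3 : 2 * u * (dlt * gchoose (u-2) (m+1)) ≤ 2 * u * (A'-B) :=
        mul_le_mul_of_nonneg_left hTA (by linarith)
      have h4 : 2 * u * (A'-B) = 2*(u*(A'-B)) := by ring
      linarith [hDle, hCD, h1, h2, h3, h4]
    have hTpos : 0 < u * (A'-B) := by linarith
    rw [div_lt_iff₀ (by linarith : (0:ℝ) < 3 * u)]
    have he : (A'-B)*(3*u) = 3*(u*(A'-B)) := by ring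
    linarith [he]
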